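/- Let q ≥ 2 be a real number, m ≥ 1 an integer, and for λ ∈ [0,1] set f(λ) = q^{λm/2} + q^{−λm/2} + (1 − q^{−1}) ∑_{k=1}^{m−1} q^{(k − m/2)λ}. Then: (Upper bound) for every λ ∈ (0,1), f(λ) ≤ f(0)^{1−λ} f(1)^{λ}. (Lower bound) for every ε > 0, every λ ∈ (0,1): f(λ) / ( f(0)^{1−λ+ε} · f(1)^{λ−ε} ) ≥ q^{εm/2} · ((1 + q^{−1})/(m+1))^{1−λ+ε} · (1 + q^{−1})^{−1}. -/

import Mathlib

open Real

/-- The function computing the elementary spherical function of `GL₂` at a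
nonarchimedean place: `f(λ) = q^{λm/2} + q^{-λm/2} + (1-q⁻¹) ∑_{k=1}^{m-1} q^{(k-m/2)λ}`. -/
noncomputable def fsph (q : ℝ) (m : ℕ) (lam : ℝ) : ℝ :=
  q ^ (lam * m / 2) + q ^ (-(lam * m / 2)) +
    (1 - q⁻¹) * ∑ k ∈ Finset.Icc 1 (m - 1), q ^ (((k : ℝ) - (m : ℝ) / 2) * lam)

section auxlemmas

lemma fsph_aux_eq (q : ℝ) (m : ℕ) (hm : 1 ≤ m) (lam : ℝ) :
    q ^ (lam * m / 2) + q ^ (-(lam * m / 2)) +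
      (1 - q⁻¹) * ∑ k ∈ Finset.Icc 1 (m - 1), q ^ (((k : ℝ) - (m : ℝ) / 2) * lam)
    = ∑ k ∈ Finset.Icc 0 m,
      (if k = 0 ∨ k = m then (1:ℝ) else 1 - q⁻¹) * q ^ (((k:ℝ) - (m:ℝ)/2) * lam) := by
  have h1 : Finset.Icc 0 m = insert 0 (insert m (Finset.Icc 1 (m-1))) := by
    ext x; simp only [Finset.mem_Icc, Finset.mem_insert]; omega
  have h2 : (0:ℕ) ∉ insert m (Finset.Icc 1 (m-1)) := by
    simp only [Finset.mem_insert, Finset.mem_Icc]; omega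
  have h3 : m ∉ Finset.Icc 1 (m-1) := by
    simp only [Finset.mem_Icc]; omega
  rw [h1, Finset.sum_insert h2, Finset.sum_insert h3]
  have hcongr : ∀ k ∈ Finset.Icc 1 (m-1),
      (if k = 0 ∨ k = m then (1:ℝ) else 1 - q⁻¹) * q ^ (((k:ℝ) - (m:ℝ)/2) * lam)
        = (1 - q⁻¹) * q ^ (((k:ℝ) - (m:ℝ)/2) * lam) := by
    intro k hk
    simp only [Finset.mem_Icc] at hk
    rw [if_neg]; push_neg; omega
  rw [Finset.sum_congr rfl hcongr, ← Finset.mul_sum]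
  have e1 : (((0:ℕ):ℝ) - (m:ℝ)/2) * lam = -(lam * m / 2) := by push_cast; ring
  have e2 : (((m:ℕ):ℝ) - (m:ℝ)/2) * lam = lam * m / 2 := by ring
  rw [e1, e2, if_pos (Or.inl rfl), if_pos (Or.inr rfl)]
  ring

lemma fsph_zero (q : ℝ) (m : ℕ) (hm : 1 ≤ m) :
    q ^ ((0:ℝ) * m / 2) + q ^ (-((0:ℝ) * m / 2)) +
      (1 - q⁻¹) * ∑ k ∈ Finset.Icc 1 (m - 1), q ^ (((k : ℝ) - (m : ℝ) / 2) * 0)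
    = 2 + (1 - q⁻¹) * ((m:ℝ) - 1) := by
  simp only [zero_mul, zero_div, neg_zero, Real.rpow_zero, mul_zero, Finset.sum_const,
    Nat.card_Icc, smul_eq_mul, nsmul_eq_mul, mul_one]
  have : ((m - 1 + 1 - 1 : ℕ) : ℝ) = (m:ℝ) - 1 := by
    have : m - 1 + 1 - 1 = m - 1 := by omega
    rw [this, Nat.cast_sub hm]; norm_num
  rw [this]; ring

lemma fsph_one (q : ℝ) (hq : 2 ≤ q) (m : ℕ) (hm : 1 ≤ m) :
    q ^ ((1:ℝ) * m / 2) + q ^ (-((1:ℝ) * m / 2)) +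
      (1 - q⁻¹) * ∑ k ∈ Finset.Icc 1 (m - 1), q ^ (((k : ℝ) - (m : ℝ) / 2) * 1)
    = (1 + q⁻¹) * q ^ ((m:ℝ) / 2) := by
  have hq0 : (0:ℝ) < q := by linarith
  have hq1 : q ≠ 1 := by linarith
  have hsum : ∑ k ∈ Finset.Icc 1 (m - 1), q ^ (((k : ℝ) - (m : ℝ) / 2) * 1)
      = ((q^m - q)/(q-1)) * q ^ (-((m:ℝ)/2)) := by
    have : ∀ k ∈ Finset.Icc 1 (m-1), q ^ (((k : ℝ) - (m : ℝ) / 2) * 1)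
        = q ^ k * q ^ (-((m:ℝ)/2)) := by
      intro k _
      rw [mul_one, show (k:ℝ) - (m:ℝ)/2 = (k:ℝ) + (-((m:ℝ)/2)) by ring,
        Real.rpow_add hq0, Real.rpow_natCast]
    rw [Finset.sum_congr rfl this, ← Finset.sum_mul]
    congr 1
    have hIcc : Finset.Icc 1 (m-1) = Finset.Ico 1 m := by
      ext x; simp only [Finset.mem_Icc, Finset.mem_Ico]; omega
    rw [hIcc, geom_sum_Ico hq1 hm, pow_one]
  rw [hsum]
  set A := q ^ ((m:ℝ)/2) with hA
  set B := q ^ (-((m:ℝ)/2)) with hB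
  have hAB : A * B = 1 := by
    rw [hA, hB, ← Real.rpow_add hq0]; norm_num
  have hqm : (q:ℝ)^m = A * A := by
    rw [hA, ← Real.rpow_add hq0, ← Real.rpow_natCast q m]; norm_num
  have h1 : (1:ℝ) * m / 2 = (m:ℝ)/2 := by ring
  have hApos : 0 < A := Real.rpow_pos_of_pos hq0 _
  have hBval : B = A⁻¹ := (inv_eq_of_mul_eq_one_right hAB).symm
  rw [h1, ← hA, ← hB, hqm, hBval]
  have hq1' : q - 1 ≠ 0 := by intro h; apply hq1; linarith
  have hqne : q ≠ 0 := ne_of_gt hq0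
  field_simp
  ring

lemma fsph_upper (q : ℝ) (hq : 2 ≤ q) (m : ℕ) (hm : 1 ≤ m) (lam : ℝ)
    (h0 : 0 < lam) (h1 : lam < 1) :
    fsph q m lam ≤ fsph q m 0 ^ (1 - lam) * fsph q m 1 ^ lam := by
  have hq0 : (0:ℝ) < q := by linarith
  set c : ℕ → ℝ := fun k => if k = 0 ∨ k = m then (1:ℝ) else 1 - q⁻¹ with hcdef
  set d : ℕ → ℝ := fun k => (k:ℝ) - (m:ℝ)/2 with hddef
  have hc : ∀ k, 0 < c k := by
    intro k
    have hinv : q⁻¹ ≤ 2⁻¹ := by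
      apply inv_anti₀ <;> norm_num <;> linarith
    simp only [hcdef]
    split <;> norm_num <;> linarith
  have heq : ∀ lam' : ℝ, fsph q m lam' = ∑ k ∈ Finset.Icc 0 m, c k * q ^ (d k * lam') :=
    fun lam' => fsph_aux_eq q m hm lam'
  have h1l : 0 < 1 - lam := by linarith
  have hpq : Real.HolderConjugate (1-lam)⁻¹ lam⁻¹ := by
    constructor
    · rw [inv_inv, inv_inv, inv_one]; ring
    · positivity
    · positivity
  have key := Real.inner_le_Lp_mul_Lq (Finset.Icc 0 m)
    (fun k => (c k) ^ (1 - lam)) (fun k => (c k * q ^ d k) ^ lam) hpq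
  have L : ∑ k ∈ Finset.Icc 0 m, (c k) ^ (1-lam) * (c k * q ^ d k) ^ lam
      = fsph q m lam := by
    rw [heq lam]
    refine Finset.sum_congr rfl fun k _ => ?_
    rw [Real.mul_rpow (hc k).le (Real.rpow_nonneg hq0.le _), ← Real.rpow_mul hq0.le,
      ← mul_assoc, ← Real.rpow_add (hc k)]
    norm_num
  have R0 : ∑ k ∈ Finset.Icc 0 m, |(c k) ^ (1-lam)| ^ (1-lam)⁻¹ = fsph q m 0 := by
    rw [heq 0]
    refine Finset.sum_congr rfl fun k _ => ?_
    rw [abs_of_nonneg (Real.rpow_nonneg (hc k).le _), ← Real.rpow_mul (hc k).le,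
      mul_inv_cancel₀ h1l.ne', Real.rpow_one, mul_zero, Real.rpow_zero, mul_one]
  have R1 : ∑ k ∈ Finset.Icc 0 m, |(c k * q ^ d k) ^ lam| ^ lam⁻¹ = fsph q m 1 := by
    rw [heq 1]
    refine Finset.sum_congr rfl fun k _ => ?_
    have hck : 0 ≤ c k * q ^ d k :=
      mul_nonneg (hc k).le (Real.rpow_nonneg hq0.le _)
    rw [abs_of_nonneg (Real.rpow_nonneg hck _), ← Real.rpow_mul hck,
      mul_inv_cancel₀ h0.ne', Real.rpow_one, mul_one]
  simp only [L, R0, R1, one_div, inv_inv] at key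
  exact key

lemma fsph_lower (q : ℝ) (hq : 2 ≤ q) (m : ℕ) (hm : 1 ≤ m) (ε : ℝ) (hε : 0 < ε)
    (lam : ℝ) (h0 : 0 < lam) (h1 : lam < 1) :
    q ^ (ε * m / 2) * ((1 + q⁻¹) / (m + 1)) ^ (1 - lam + ε) * (1 + q⁻¹)⁻¹
      ≤ fsph q m lam / (fsph q m 0 ^ (1 - lam + ε) * fsph q m 1 ^ (lam - ε)) := by
  have hq0 : (0:ℝ) < q := by linarith
  have hinv : q⁻¹ ≤ 2⁻¹ := by
    apply inv_anti₀ <;> linarith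
  have hinv0 : (0:ℝ) < q⁻¹ := by positivity
  have ha : (0:ℝ) < 1 + q⁻¹ := by linarith
  have hM : (0:ℝ) < (m:ℝ) + 1 := by positivity
  have hm1 : (1:ℝ) ≤ (m:ℝ) := by exact_mod_cast hm
  have hf0 : fsph q m 0 = 2 + (1 - q⁻¹) * ((m:ℝ) - 1) := fsph_zero q m hm
  have hf1 : fsph q m 1 = (1 + q⁻¹) * q ^ ((m:ℝ) / 2) := fsph_one q hq m hm
  have hf0pos : 0 < fsph q m 0 := by
    rw [hf0]; nlinarith
  have hf0le : fsph q m 0 ≤ (m:ℝ) + 1 := by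
    rw [hf0]; nlinarith
  have hf1pos : 0 < fsph q m 1 := by
    rw [hf1]; positivity
  have hD : 0 < fsph q m 0 ^ (1 - lam + ε) * fsph q m 1 ^ (lam - ε) :=
    mul_pos (Real.rpow_pos_of_pos hf0pos _) (Real.rpow_pos_of_pos hf1pos _)
  rw [le_div_iff₀ hD]
  have hs : (0:ℝ) < 1 - lam + ε := by linarith
  have key : q ^ (ε * m / 2) * ((1 + q⁻¹) / (m + 1)) ^ (1 - lam + ε) * (1 + q⁻¹)⁻¹ *
        (fsph q m 0 ^ (1 - lam + ε) * fsph q m 1 ^ (lam - ε))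
      = q ^ (lam * m / 2) * (fsph q m 0 / ((m:ℝ) + 1)) ^ (1 - lam + ε) := by
    rw [hf1]
    calc q ^ (ε * m / 2) * ((1 + q⁻¹) / ((m:ℝ) + 1)) ^ (1 - lam + ε) * (1 + q⁻¹)⁻¹ *
          (fsph q m 0 ^ (1 - lam + ε) * ((1 + q⁻¹) * q ^ ((m:ℝ)/2)) ^ (lam - ε))
        = q ^ (ε * m / 2) * ((1 + q⁻¹) ^ (1 - lam + ε) / ((m:ℝ) + 1) ^ (1 - lam + ε)) *
            (1 + q⁻¹)⁻¹ * (fsph q m 0 ^ (1 - lam + ε) *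
              ((1 + q⁻¹) ^ (lam - ε) * q ^ (((m:ℝ)/2) * (lam - ε)))) := by
          rw [Real.div_rpow ha.le hM.le,
            Real.mul_rpow ha.le (Real.rpow_nonneg hq0.le _), ← Real.rpow_mul hq0.le]
      _ = ((1 + q⁻¹) ^ (1 - lam + ε) * (1 + q⁻¹) ^ (-1:ℝ) * (1 + q⁻¹) ^ (lam - ε)) *
            (q ^ (ε * m / 2) * q ^ (((m:ℝ)/2) * (lam - ε))) *
            (fsph q m 0 ^ (1 - lam + ε) / ((m:ℝ) + 1) ^ (1 - lam + ε)) := by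
          rw [Real.rpow_neg_one]; ring
      _ = (1 + q⁻¹) ^ ((1 - lam + ε) + (-1:ℝ) + (lam - ε)) *
            q ^ (ε * m / 2 + ((m:ℝ)/2) * (lam - ε)) *
            (fsph q m 0 ^ (1 - lam + ε) / ((m:ℝ) + 1) ^ (1 - lam + ε)) := by
          rw [← Real.rpow_add ha, ← Real.rpow_add ha, ← Real.rpow_add hq0]
      _ = q ^ (lam * m / 2) * (fsph q m 0 / ((m:ℝ) + 1)) ^ (1 - lam + ε) := by
          rw [show (1 - lam + ε) + (-1:ℝ) + (lam - ε) = 0 by ring, Real.rpow_zero,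
            show ε * (m:ℝ) / 2 + ((m:ℝ)/2) * (lam - ε) = lam * m / 2 by ring,
            Real.div_rpow hf0pos.le hM.le]
          ring
  rw [key]
  have hle1 : (fsph q m 0 / ((m:ℝ) + 1)) ^ (1 - lam + ε) ≤ 1 := by
    apply Real.rpow_le_one (by positivity) _ hs.le
    rw [div_le_one hM]; exact hf0le
  have hflam : q ^ (lam * m / 2) ≤ fsph q m lam := by
    have h2 : (0:ℝ) ≤ q ^ (-(lam * m / 2)) := Real.rpow_nonneg hq0.le _
    have h3 : (0:ℝ) ≤ (1 - q⁻¹) *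
        ∑ k ∈ Finset.Icc 1 (m - 1), q ^ (((k : ℝ) - (m : ℝ) / 2) * lam) := by
      apply mul_nonneg (by linarith)
      exact Finset.sum_nonneg fun k _ => Real.rpow_nonneg hq0.le _
    show _ ≤ q ^ (lam * m / 2) + q ^ (-(lam * m / 2)) + _
    linarith
  calc q ^ (lam * m / 2) * (fsph q m 0 / ((m:ℝ) + 1)) ^ (1 - lam + ε)
      ≤ q ^ (lam * m / 2) * 1 :=
        mul_le_mul_of_nonneg_left hle1 (Real.rpow_nonneg hq0.le _)
    _ = q ^ (lam * m / 2) := mul_one _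
    _ ≤ fsph q m lam := hflam

end auxlemmas

theorem stmt12 (q : ℝ) (hq : 2 ≤ q) (m : ℕ) (hm : 1 ≤ m) :
    (∀ lam : ℝ, 0 < lam → lam < 1 →
        fsph q m lam ≤ fsph q m 0 ^ (1 - lam) * fsph q m 1 ^ lam) ∧
    (∀ ε : ℝ, 0 < ε → ∀ lam : ℝ, 0 < lam → lam < 1 →
        q ^ (ε * m / 2) * ((1 + q⁻¹) / (m + 1)) ^ (1 - lam + ε) * (1 + q⁻¹)⁻¹
          ≤ fsph q m lam / (fsph q m 0 ^ (1 - lam + ε) * fsph q m 1 ^ (lam - ε))) :=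
  ⟨fun lam h0 h1 => fsph_upper q hq m hm lam h0 h1,
   fun ε hε lam h0 h1 => fsph_lower q hq m hm ε hε lam h0 h1⟩
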